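/- Let G = (V,E) be a finite simple graph and let B, C ⊆ E be disjoint edge sets with S = B ∪ C. Define X₁ = ∂S \ ∂C, X₂ = ∂S \ ∂B, X₃ = ∂S ∩ ∂B ∩ ∂C and X₄ = (∂B ∪ ∂C) \ ∂S. Call a pair of colorings c₁ : ∂B → {black, white, grey} and c₂ : ∂C → {black, white, grey} consistent with c : ∂S → {black, white, grey} if: for u ∈ X₁, c(u) = c₁(u); for u ∈ X₂, c(u) = c₂(u); for u ∈ X₃, if c(u) ∈ {black, grey} then c₁(u) = c₂(u) = c(u), and if c(u) = white then either (c₁(u) = white and c₂(u) = grey) or (c₁(u) = grey and c₂(u) = white); for u ∈ X₄, exactly one of the following holds: c₁(u) = c₂(u) = black, or (c₁(u) = white and c₂(u) = grey), or (c₁(u) = grey and c₂(u) = white). Then for every coloring c : ∂S → {black, white, grey}, A_S(c) = min over all pairs (c₁, c₂) consistent with c of A_B(c₁) + A_C(c₂) − #black(X₃, c₁) − #black(X₄, c₁), where #black(X, c₁) is the number of vertices of X colored black by c₁ (the minimum over an empty set being ∞). -/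
import Mathlib


/-- `V(S)`: the set of vertices incident to some edge of `S`. -/
def incVerts {V : Type*} (S : Set (Sym2 V)) : Set V :=
  {v | ∃ e ∈ S, v ∈ e}

/-- The boundary `∂S` of an edge set `S ⊆ E(G)`: vertices incident both to an edge of `S`
and to an edge of `E(G) \ S`. -/
def bdry {V : Type*} (G : SimpleGraph V) (S : Set (Sym2 V)) : Set V :=
  {v | (∃ e ∈ S, v ∈ e) ∧ ∃ e ∈ G.edgeSet \ S, v ∈ e}

/-- The three colors used in the dynamic programming. -/
inductive Color
  | black
  | white
  | grey
deriving DecidableEq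

/-- `D ⊆ V(F)` is a valid partial dominating set for the edge set `F` and the coloring
`c` of the boundary `∂F`: black boundary vertices are in `D`; white boundary vertices are
not in `D` but are joined by an edge of `F` to a vertex of `D`; grey boundary vertices are
not in `D`; every non-boundary vertex of `V(F)` is in `D` or joined by an edge of `F` to a
vertex of `D`. -/
def ValidPartial {V : Type*} (G : SimpleGraph V) (F : Set (Sym2 V)) (c : V → Color)
    (D : Set V) : Prop :=
  D ⊆ incVerts F ∧
  (∀ v ∈ bdry G F, c v = Color.black → v ∈ D) ∧
  (∀ v ∈ bdry G F, c v = Color.white → v ∉ D ∧ ∃ u ∈ D, s(v, u) ∈ F) ∧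
  (∀ v ∈ bdry G F, c v = Color.grey → v ∉ D) ∧
  (∀ v ∈ incVerts F, v ∉ bdry G F → v ∈ D ∨ ∃ u ∈ D, s(v, u) ∈ F)

/-- `A_F(c) ∈ ℕ ∪ {∞}`: the minimum cardinality of a valid partial dominating set for `F`
and `c` (`∞` if none exists). -/
noncomputable def costA {V : Type*} (G : SimpleGraph V) (F : Set (Sym2 V))
    (c : V → Color) : ℕ∞ :=
  sInf {n : ℕ∞ | ∃ D : Set V, ValidPartial G F c D ∧ n = D.ncard}

/-- The number of vertices of `X` colored black by `c`. -/
noncomputable def nblack {V : Type*} (X : Set V) (c : V → Color) : ℕ :=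
  (X ∩ {v | c v = Color.black}).ncard

/-- The colorings `c₁` of `∂B` and `c₂` of `∂C` are consistent with the coloring `c` of
`∂(B ∪ C)`, relative to the sets `X₁ = ∂(B∪C) \ ∂C`, `X₂ = ∂(B∪C) \ ∂B`,
`X₃ = ∂(B∪C) ∩ ∂B ∩ ∂C` and `X₄ = (∂B ∪ ∂C) \ ∂(B∪C)`. -/
def Consistent {V : Type*} (G : SimpleGraph V) (B C : Set (Sym2 V))
    (c c₁ c₂ : V → Color) : Prop :=
  (∀ u ∈ bdry G (B ∪ C) \ bdry G C, c u = c₁ u) ∧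
  (∀ u ∈ bdry G (B ∪ C) \ bdry G B, c u = c₂ u) ∧
  (∀ u ∈ bdry G (B ∪ C) ∩ bdry G B ∩ bdry G C,
    ((c u = Color.black ∨ c u = Color.grey) → c₁ u = c u ∧ c₂ u = c u) ∧
    (c u = Color.white →
      (c₁ u = Color.white ∧ c₂ u = Color.grey) ∨
      (c₁ u = Color.grey ∧ c₂ u = Color.white))) ∧
  (∀ u ∈ (bdry G B ∪ bdry G C) \ bdry G (B ∪ C),
    (c₁ u = Color.black ∧ c₂ u = Color.black) ∨
    (c₁ u = Color.white ∧ c₂ u = Color.grey) ∨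
    (c₁ u = Color.grey ∧ c₂ u = Color.white))

section helpers

variable {V : Type*} {G : SimpleGraph V} {B C : Set (Sym2 V)} {v u : V}

lemma mem_incVerts_left {F : Set (Sym2 V)} (h : s(v,u) ∈ F) : v ∈ incVerts F :=
  ⟨s(v,u), h, Sym2.mem_mk_left v u⟩

lemma incVerts_union (B C : Set (Sym2 V)) :
    incVerts (B ∪ C) = incVerts B ∪ incVerts C := by
  ext v
  constructor
  · rintro ⟨e, (he | he), hv⟩
    · exact Or.inl ⟨e, he, hv⟩
    · exact Or.inr ⟨e, he, hv⟩
  · rintro (⟨e, he, hv⟩ | ⟨e, he, hv⟩)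
    · exact ⟨e, Or.inl he, hv⟩
    · exact ⟨e, Or.inr he, hv⟩

lemma bdry_union_subset (hv : v ∈ bdry G (B ∪ C)) : v ∈ bdry G B ∪ bdry G C := by
  obtain ⟨⟨e₁, he₁, hv₁⟩, e₂, ⟨he₂E, he₂S⟩, hv₂⟩ := hv
  rcases he₁ with h | h
  · exact Or.inl ⟨⟨e₁, h, hv₁⟩, e₂, ⟨he₂E, fun hb => he₂S (Or.inl hb)⟩, hv₂⟩
  · exact Or.inr ⟨⟨e₁, h, hv₁⟩, e₂, ⟨he₂E, fun hb => he₂S (Or.inr hb)⟩, hv₂⟩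

lemma mem_bdry_of_incVerts {A : Set (Sym2 V)} (hA : A ⊆ B ∪ C)
    (hv : v ∈ bdry G (B ∪ C)) (hvA : v ∈ incVerts A) : v ∈ bdry G A := by
  obtain ⟨e, ⟨heE, heS⟩, hve⟩ := hv.2
  exact ⟨hvA, e, ⟨heE, fun h => heS (hA h)⟩, hve⟩

lemma bdry_of_both (hB : B ⊆ G.edgeSet) (hBC : Disjoint B C)
    (h1 : v ∈ incVerts B) (h2 : v ∈ incVerts C) : v ∈ bdry G C := by
  obtain ⟨e, he, hve⟩ := h1
  exact ⟨h2, e, ⟨hB he, fun hc => Set.disjoint_left.mp hBC he hc⟩, hve⟩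

lemma bdry_other (hB : B ⊆ G.edgeSet) (hBC : Disjoint B C)
    (hvB : v ∈ bdry G B) (hnS : v ∉ bdry G (B ∪ C)) : v ∈ bdry G C := by
  obtain ⟨⟨e₁, he₁, hv₁⟩, e₂, ⟨he₂E, he₂B⟩, hv₂⟩ := hvB
  by_cases hc : e₂ ∈ C
  · exact bdry_of_both hB hBC ⟨e₁, he₁, hv₁⟩ ⟨e₂, hc, hv₂⟩
  · exact absurd ⟨⟨e₁, Or.inl he₁, hv₁⟩,
      e₂, ⟨he₂E, fun h => h.elim he₂B hc⟩, hv₂⟩ hnS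

lemma no_edge_of_not_bdry (hC : C ⊆ G.edgeSet) (hBC : Disjoint B C)
    (hvB : v ∈ incVerts B) (hnb : v ∉ bdry G B) (h : s(v,u) ∈ C) : False :=
  hnb ⟨hvB, s(v,u), ⟨hC h, fun hb => Set.disjoint_left.mp hBC hb h⟩,
    Sym2.mem_mk_left v u⟩

lemma not_bdry_union_of_not_bdry (hvB : v ∈ incVerts B) (hnb : v ∉ bdry G B)
    (h : v ∈ bdry G (B ∪ C)) : False :=
  hnb (mem_bdry_of_incVerts Set.subset_union_left h hvB)

end helpers

section combine

variable {V : Type*} {G : SimpleGraph V} {B C : Set (Sym2 V)}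

lemma combine_valid (hB : B ⊆ G.edgeSet) (hC : C ⊆ G.edgeSet) (hBC : Disjoint B C)
    {c c₁ c₂ : V → Color} {D₁ D₂ : Set V}
    (hcons : Consistent G B C c c₁ c₂)
    (h₁ : ValidPartial G B c₁ D₁) (h₂ : ValidPartial G C c₂ D₂) :
    ValidPartial G (B ∪ C) c (D₁ ∪ D₂) := by
  obtain ⟨hX₁, hX₂, hX₃, hX₄⟩ := hcons
  obtain ⟨h₁s, h₁b, h₁w, h₁g, h₁i⟩ := h₁
  obtain ⟨h₂s, h₂b, h₂w, h₂g, h₂i⟩ := h₂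
  have hD₂C : ∀ v ∈ bdry G (B ∪ C), v ∉ bdry G C → v ∉ D₂ := by
    intro v hv hvC hvD
    exact hvC (mem_bdry_of_incVerts Set.subset_union_right hv (h₂s hvD))
  have hD₁B : ∀ v ∈ bdry G (B ∪ C), v ∉ bdry G B → v ∉ D₁ := by
    intro v hv hvB hvD
    exact hvB (mem_bdry_of_incVerts Set.subset_union_left hv (h₁s hvD))
  refine ⟨?_, ?_, ?_, ?_, ?_⟩
  · rintro v (h | h)
    · obtain ⟨e, he, hv⟩ := h₁s h; exact ⟨e, Or.inl he, hv⟩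
    · obtain ⟨e, he, hv⟩ := h₂s h; exact ⟨e, Or.inr he, hv⟩
  · intro v hv hblack
    by_cases hvB : v ∈ bdry G B
    · by_cases hvC : v ∈ bdry G C
      · have h3 := ((hX₃ v ⟨⟨hv, hvB⟩, hvC⟩).1 (Or.inl hblack)).1
        exact Or.inl (h₁b v hvB (h3.trans hblack))
      · have h1 := hX₁ v ⟨hv, hvC⟩
        exact Or.inl (h₁b v hvB (h1 ▸ hblack))
    · have hvC : v ∈ bdry G C := (bdry_union_subset hv).resolve_left hvB
      have h2 := hX₂ v ⟨hv, hvB⟩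
      exact Or.inr (h₂b v hvC (h2 ▸ hblack))
  · intro v hv hwhite
    by_cases hvB : v ∈ bdry G B
    · by_cases hvC : v ∈ bdry G C
      · rcases (hX₃ v ⟨⟨hv, hvB⟩, hvC⟩).2 hwhite with ⟨hw1, hg2⟩ | ⟨hg1, hw2⟩
        · obtain ⟨hn1, u, hu, he⟩ := h₁w v hvB hw1
          exact ⟨fun h => h.elim hn1 (h₂g v hvC hg2), u, Or.inl hu, Or.inl he⟩
        · obtain ⟨hn2, u, hu, he⟩ := h₂w v hvC hw2
          exact ⟨fun h => h.elim (h₁g v hvB hg1) hn2, u, Or.inr hu, Or.inr he⟩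
      · have h1 := hX₁ v ⟨hv, hvC⟩
        obtain ⟨hn1, u, hu, he⟩ := h₁w v hvB (h1 ▸ hwhite)
        exact ⟨fun h => h.elim hn1 (hD₂C v hv hvC), u, Or.inl hu, Or.inl he⟩
    · have hvC : v ∈ bdry G C := (bdry_union_subset hv).resolve_left hvB
      have h2 := hX₂ v ⟨hv, hvB⟩
      obtain ⟨hn2, u, hu, he⟩ := h₂w v hvC (h2 ▸ hwhite)
      exact ⟨fun h => h.elim (hD₁B v hv hvB) hn2, u, Or.inr hu, Or.inr he⟩
  · intro v hv hgrey
    by_cases hvB : v ∈ bdry G B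
    · by_cases hvC : v ∈ bdry G C
      · have h3 := (hX₃ v ⟨⟨hv, hvB⟩, hvC⟩).1 (Or.inr hgrey)
        exact fun h => h.elim (h₁g v hvB (h3.1.trans hgrey)) (h₂g v hvC (h3.2.trans hgrey))
      · have h1 := hX₁ v ⟨hv, hvC⟩
        exact fun h => h.elim (h₁g v hvB (h1 ▸ hgrey)) (hD₂C v hv hvC)
    · have hvC : v ∈ bdry G C := (bdry_union_subset hv).resolve_left hvB
      have h2 := hX₂ v ⟨hv, hvB⟩
      exact fun h => h.elim (hD₁B v hv hvB) (h₂g v hvC (h2 ▸ hgrey))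
  · intro v hv hnb
    rw [incVerts_union] at hv
    rcases hv with hv | hv
    · by_cases hvB : v ∈ bdry G B
      · rcases hX₄ v ⟨Or.inl hvB, hnb⟩ with ⟨hb1, _⟩ | ⟨hw1, _⟩ | ⟨_, hw2⟩
        · exact Or.inl (Or.inl (h₁b v hvB hb1))
        · obtain ⟨_, u, hu, he⟩ := h₁w v hvB hw1
          exact Or.inr ⟨u, Or.inl hu, Or.inl he⟩
        · have hvC : v ∈ bdry G C := bdry_other hB hBC hvB hnb
          obtain ⟨_, u, hu, he⟩ := h₂w v hvC hw2
          exact Or.inr ⟨u, Or.inr hu, Or.inr he⟩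
      · rcases h₁i v hv hvB with h | ⟨u, hu, he⟩
        · exact Or.inl (Or.inl h)
        · exact Or.inr ⟨u, Or.inl hu, Or.inl he⟩
    · by_cases hvC : v ∈ bdry G C
      · have hnb' : v ∉ bdry G (C ∪ B) := by rwa [Set.union_comm C B]
        rcases hX₄ v ⟨Or.inr hvC, hnb⟩ with ⟨hb1, hb2⟩ | ⟨hw1, _⟩ | ⟨_, hw2⟩
        · exact Or.inl (Or.inr (h₂b v hvC hb2))
        · have hvB : v ∈ bdry G B := by
            have := bdry_other hC hBC.symm hvC hnb'
            exact this
          obtain ⟨_, u, hu, he⟩ := h₁w v hvB hw1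
          exact Or.inr ⟨u, Or.inl hu, Or.inl he⟩
        · obtain ⟨_, u, hu, he⟩ := h₂w v hvC hw2
          exact Or.inr ⟨u, Or.inr hu, Or.inr he⟩
      · rcases h₂i v hv hvC with h | ⟨u, hu, he⟩
        · exact Or.inl (Or.inr h)
        · exact Or.inr ⟨u, Or.inr hu, Or.inr he⟩

end combine

section inter

variable {V : Type*} {G : SimpleGraph V} {B C : Set (Sym2 V)}

lemma inter_eq_blacks (hB : B ⊆ G.edgeSet) (hC : C ⊆ G.edgeSet) (hBC : Disjoint B C)
    {c c₁ c₂ : V → Color} {D₁ D₂ : Set V}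
    (hcons : Consistent G B C c c₁ c₂)
    (h₁ : ValidPartial G B c₁ D₁) (h₂ : ValidPartial G C c₂ D₂) :
    D₁ ∩ D₂ =
      ((bdry G (B ∪ C) ∩ bdry G B ∩ bdry G C) ∪
        ((bdry G B ∪ bdry G C) \ bdry G (B ∪ C))) ∩ {v | c₁ v = Color.black} := by
  obtain ⟨hX₁, hX₂, hX₃, hX₄⟩ := hcons
  obtain ⟨h₁s, h₁b, h₁w, h₁g, h₁i⟩ := h₁
  obtain ⟨h₂s, h₂b, h₂w, h₂g, h₂i⟩ := h₂
  ext v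
  constructor
  · rintro ⟨hv₁, hv₂⟩
    have hvB : v ∈ bdry G B := bdry_of_both hC hBC.symm (h₂s hv₂) (h₁s hv₁)
    have hvC : v ∈ bdry G C := bdry_of_both hB hBC (h₁s hv₁) (h₂s hv₂)
    have hbl : c₁ v = Color.black := by
      cases h : c₁ v with
      | black => rfl
      | white => exact absurd hv₁ (h₁w v hvB h).1
      | grey => exact absurd hv₁ (h₁g v hvB h)
    refine ⟨?_, hbl⟩
    by_cases hvS : v ∈ bdry G (B ∪ C)
    · exact Or.inl ⟨⟨hvS, hvB⟩, hvC⟩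
    · exact Or.inr ⟨Or.inl hvB, hvS⟩
  · rintro ⟨(⟨⟨hvS, hvB⟩, hvC⟩ | ⟨hvBC, hvS⟩), hbl⟩
    · have h3 := hX₃ v ⟨⟨hvS, hvB⟩, hvC⟩
      have hc2 : c₂ v = Color.black := by
        cases h : c v with
        | black => exact (h3.1 (Or.inl h)).2.trans h
        | white =>
          rcases h3.2 h with ⟨hw, _⟩ | ⟨hg, _⟩
          · exact absurd (hbl.symm.trans hw) (by simp)
          · exact absurd (hbl.symm.trans hg) (by simp)
        | grey => exact absurd (hbl.symm.trans ((h3.1 (Or.inr h)).1.trans h)) (by simp)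
      exact ⟨h₁b v hvB hbl, h₂b v hvC hc2⟩
    · rcases hX₄ v ⟨hvBC, hvS⟩ with ⟨hb1, hb2⟩ | ⟨hw1, _⟩ | ⟨hg1, _⟩
      · have hvB : v ∈ bdry G B := by
          rcases hvBC with h | h
          · exact h
          · exact bdry_other hC hBC.symm h (by rwa [Set.union_comm C B])
        have hvC : v ∈ bdry G C := by
          rcases hvBC with h | h
          · exact bdry_other hB hBC h hvS
          · exact h
        exact ⟨h₁b v hvB hb1, h₂b v hvC hb2⟩
      · exact absurd (hbl.symm.trans hw1) (by simp)
      · exact absurd (hbl.symm.trans hg1) (by simp)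

end inter

section split

variable {V : Type*} {G : SimpleGraph V} {B C : Set (Sym2 V)}

lemma split_valid (hB : B ⊆ G.edgeSet) (hC : C ⊆ G.edgeSet) (hBC : Disjoint B C)
    {c : V → Color} {D : Set V} (hD : ValidPartial G (B ∪ C) c D) :
    ∃ c₁ c₂ : V → Color, Consistent G B C c c₁ c₂ ∧
      ValidPartial G B c₁ (D ∩ incVerts B) ∧
      ValidPartial G C c₂ (D ∩ incVerts C) := by
  classical
  obtain ⟨hDs, hDb, hDw, hDg, hDi⟩ := hD
  refine ⟨fun v => if v ∈ bdry G (B ∪ C) then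
      (if c v = Color.white ∧ v ∈ bdry G C then
        (if ∃ u ∈ D, s(v, u) ∈ B then Color.white else Color.grey) else c v)
    else (if v ∈ D then Color.black
      else if ∃ u ∈ D, s(v, u) ∈ B then Color.white else Color.grey),
    fun v => if v ∈ bdry G (B ∪ C) then
      (if c v = Color.white ∧ v ∈ bdry G B then
        (if ∃ u ∈ D, s(v, u) ∈ B then Color.grey else Color.white) else c v)
    else (if v ∈ D then Color.black
      else if ∃ u ∈ D, s(v, u) ∈ B then Color.grey else Color.white),
    ⟨?_, ?_, ?_, ?_⟩, ⟨Set.inter_subset_right, ?_, ?_, ?_, ?_⟩,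
    ⟨Set.inter_subset_right, ?_, ?_, ?_, ?_⟩⟩
  -- Consistency, clause X₁
  · intro u hu
    beta_reduce
    rw [if_pos hu.1, if_neg (fun h : _ ∧ _ => hu.2 h.2)]
  -- Consistency, clause X₂
  · intro u hu
    beta_reduce
    rw [if_pos hu.1, if_neg (fun h : _ ∧ _ => hu.2 h.2)]
  -- Consistency, clause X₃
  · intro u hu
    beta_reduce
    constructor
    · intro hcu
      have hne1 : ¬(c u = Color.white ∧ u ∈ bdry G C) := by
        rcases hcu with h | h <;> simp [h]
      have hne2 : ¬(c u = Color.white ∧ u ∈ bdry G B) := by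
        rcases hcu with h | h <;> simp [h]
      rw [if_pos hu.1.1, if_pos hu.1.1, if_neg hne1, if_neg hne2]
      exact ⟨rfl, rfl⟩
    · intro hw
      rw [if_pos hu.1.1, if_pos hu.1.1]
      by_cases hbd : ∃ x ∈ D, s(u, x) ∈ B
      · rw [if_pos hbd, if_pos hbd,
          if_pos (show c u = Color.white ∧ u ∈ bdry G C from ⟨hw, hu.2⟩),
          if_pos (show c u = Color.white ∧ u ∈ bdry G B from ⟨hw, hu.1.2⟩)]
        exact Or.inl ⟨rfl, rfl⟩
      · rw [if_neg hbd, if_neg hbd,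
          if_pos (show c u = Color.white ∧ u ∈ bdry G C from ⟨hw, hu.2⟩),
          if_pos (show c u = Color.white ∧ u ∈ bdry G B from ⟨hw, hu.1.2⟩)]
        exact Or.inr ⟨rfl, rfl⟩
  -- Consistency, clause X₄
  · intro u hu
    beta_reduce
    rw [if_neg hu.2, if_neg hu.2]
    by_cases hd : u ∈ D
    · rw [if_pos hd, if_pos hd]; exact Or.inl ⟨rfl, rfl⟩
    · rw [if_neg hd, if_neg hd]
      by_cases hbd : ∃ x ∈ D, s(u, x) ∈ B
      · rw [if_pos hbd, if_pos hbd]; exact Or.inr (Or.inl ⟨rfl, rfl⟩)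
      · rw [if_neg hbd, if_neg hbd]; exact Or.inr (Or.inr ⟨rfl, rfl⟩)
  -- ValidPartial for B : black
  · intro v hvB h
    beta_reduce at h
    by_cases hvS : v ∈ bdry G (B ∪ C)
    · rw [if_pos hvS] at h
      by_cases hw : c v = Color.white ∧ v ∈ bdry G C
      · rw [if_pos hw] at h
        by_cases hbd : ∃ u ∈ D, s(v, u) ∈ B
        · rw [if_pos hbd] at h; exact Color.noConfusion h
        · rw [if_neg hbd] at h; exact Color.noConfusion h
      · rw [if_neg hw] at h
        exact ⟨hDb v hvS h, hvB.1⟩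
    · rw [if_neg hvS] at h
      by_cases hd : v ∈ D
      · exact ⟨hd, hvB.1⟩
      · rw [if_neg hd] at h
        by_cases hbd : ∃ u ∈ D, s(v, u) ∈ B
        · rw [if_pos hbd] at h; exact Color.noConfusion h
        · rw [if_neg hbd] at h; exact Color.noConfusion h
  -- ValidPartial for B : white
  · intro v hvB h
    beta_reduce at h
    by_cases hvS : v ∈ bdry G (B ∪ C)
    · rw [if_pos hvS] at h
      by_cases hw : c v = Color.white ∧ v ∈ bdry G C
      · rw [if_pos hw] at h
        by_cases hbd : ∃ u ∈ D, s(v, u) ∈ B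
        · obtain ⟨u, hu, hub⟩ := hbd
          have hvnD : v ∉ D := (hDw v hvS hw.1).1
          exact ⟨fun hx => hvnD hx.1,
            u, ⟨hu, ⟨s(v, u), hub, Sym2.mem_mk_right v u⟩⟩, hub⟩
        · rw [if_neg hbd] at h; exact Color.noConfusion h
      · rw [if_neg hw] at h
        have hvnC : v ∉ bdry G C := fun hc => hw ⟨h, hc⟩
        obtain ⟨hvnD, u, hu, hus⟩ := hDw v hvS h
        have hub : s(v, u) ∈ B := by
          rcases hus with hb | hc
          · exact hb
          · exact absurd (mem_bdry_of_incVerts Set.subset_union_right hvS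
              (mem_incVerts_left hc)) hvnC
        exact ⟨fun hx => hvnD hx.1,
          u, ⟨hu, ⟨s(v, u), hub, Sym2.mem_mk_right v u⟩⟩, hub⟩
    · rw [if_neg hvS] at h
      by_cases hd : v ∈ D
      · rw [if_pos hd] at h; exact Color.noConfusion h
      · rw [if_neg hd] at h
        by_cases hbd : ∃ u ∈ D, s(v, u) ∈ B
        · obtain ⟨u, hu, hub⟩ := hbd
          exact ⟨fun hx => hd hx.1,
            u, ⟨hu, ⟨s(v, u), hub, Sym2.mem_mk_right v u⟩⟩, hub⟩
        · rw [if_neg hbd] at h; exact Color.noConfusion h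
  -- ValidPartial for B : grey
  · intro v hvB h
    beta_reduce at h
    by_cases hvS : v ∈ bdry G (B ∪ C)
    · rw [if_pos hvS] at h
      by_cases hw : c v = Color.white ∧ v ∈ bdry G C
      · intro hx; exact (hDw v hvS hw.1).1 hx.1
      · rw [if_neg hw] at h
        intro hx; exact hDg v hvS h hx.1
    · rw [if_neg hvS] at h
      intro hx
      rw [if_pos hx.1] at h; exact Color.noConfusion h
  -- ValidPartial for B : interior
  · intro v hv hnb
    have hvS : v ∉ bdry G (B ∪ C) := fun h => not_bdry_union_of_not_bdry hv hnb h
    rcases hDi v (by rw [incVerts_union]; exact Or.inl hv) hvS with hd | ⟨u, hu, hus⟩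
    · exact Or.inl ⟨hd, hv⟩
    · have hub : s(v, u) ∈ B :=
        hus.resolve_right (fun hc => no_edge_of_not_bdry hC hBC hv hnb hc)
      exact Or.inr ⟨u, ⟨hu, ⟨s(v, u), hub, Sym2.mem_mk_right v u⟩⟩, hub⟩
  -- ValidPartial for C : black
  · intro v hvC h
    beta_reduce at h
    by_cases hvS : v ∈ bdry G (B ∪ C)
    · rw [if_pos hvS] at h
      by_cases hw : c v = Color.white ∧ v ∈ bdry G B
      · rw [if_pos hw] at h
        by_cases hbd : ∃ u ∈ D, s(v, u) ∈ B
        · rw [if_pos hbd] at h; exact Color.noConfusion h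
        · rw [if_neg hbd] at h; exact Color.noConfusion h
      · rw [if_neg hw] at h
        exact ⟨hDb v hvS h, hvC.1⟩
    · rw [if_neg hvS] at h
      by_cases hd : v ∈ D
      · exact ⟨hd, hvC.1⟩
      · rw [if_neg hd] at h
        by_cases hbd : ∃ u ∈ D, s(v, u) ∈ B
        · rw [if_pos hbd] at h; exact Color.noConfusion h
        · rw [if_neg hbd] at h; exact Color.noConfusion h
  -- ValidPartial for C : white
  · intro v hvC h
    beta_reduce at h
    by_cases hvS : v ∈ bdry G (B ∪ C)
    · rw [if_pos hvS] at h
      by_cases hw : c v = Color.white ∧ v ∈ bdry G B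
      · rw [if_pos hw] at h
        by_cases hbd : ∃ u ∈ D, s(v, u) ∈ B
        · rw [if_pos hbd] at h; exact Color.noConfusion h
        · obtain ⟨hvnD, u, hu, hus⟩ := hDw v hvS hw.1
          have huc : s(v, u) ∈ C := by
            rcases hus with hb | hc
            · exact absurd ⟨u, hu, hb⟩ hbd
            · exact hc
          exact ⟨fun hx => hvnD hx.1,
            u, ⟨hu, ⟨s(v, u), huc, Sym2.mem_mk_right v u⟩⟩, huc⟩
      · rw [if_neg hw] at h
        have hvnB : v ∉ bdry G B := fun hb => hw ⟨h, hb⟩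
        obtain ⟨hvnD, u, hu, hus⟩ := hDw v hvS h
        have huc : s(v, u) ∈ C := by
          rcases hus with hb | hc
          · exact absurd (mem_bdry_of_incVerts Set.subset_union_left hvS
              (mem_incVerts_left hb)) hvnB
          · exact hc
        exact ⟨fun hx => hvnD hx.1,
          u, ⟨hu, ⟨s(v, u), huc, Sym2.mem_mk_right v u⟩⟩, huc⟩
    · rw [if_neg hvS] at h
      by_cases hd : v ∈ D
      · rw [if_pos hd] at h; exact Color.noConfusion h
      · rw [if_neg hd] at h
        by_cases hbd : ∃ u ∈ D, s(v, u) ∈ B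
        · rw [if_pos hbd] at h; exact Color.noConfusion h
        · rcases hDi v (by rw [incVerts_union]; exact Or.inr hvC.1) hvS with hd' | ⟨u, hu, hus⟩
          · exact absurd hd' hd
          · have huc : s(v, u) ∈ C := by
              rcases hus with hb | hc
              · exact absurd ⟨u, hu, hb⟩ hbd
              · exact hc
            exact ⟨fun hx => hd hx.1,
              u, ⟨hu, ⟨s(v, u), huc, Sym2.mem_mk_right v u⟩⟩, huc⟩
  -- ValidPartial for C : grey
  · intro v hvC h
    beta_reduce at h
    by_cases hvS : v ∈ bdry G (B ∪ C)
    · rw [if_pos hvS] at h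
      by_cases hw : c v = Color.white ∧ v ∈ bdry G B
      · intro hx; exact (hDw v hvS hw.1).1 hx.1
      · rw [if_neg hw] at h
        intro hx; exact hDg v hvS h hx.1
    · rw [if_neg hvS] at h
      intro hx
      rw [if_pos hx.1] at h; exact Color.noConfusion h
  -- ValidPartial for C : interior
  · intro v hv hnb
    have hvS : v ∉ bdry G (B ∪ C) := fun h =>
      hnb (mem_bdry_of_incVerts Set.subset_union_right h hv)
    rcases hDi v (by rw [incVerts_union]; exact Or.inr hv) hvS with hd | ⟨u, hu, hus⟩
    · exact Or.inl ⟨hd, hv⟩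
    · have huc : s(v, u) ∈ C :=
        hus.resolve_left (fun hb => no_edge_of_not_bdry hB hBC.symm hv hnb hb)
      exact Or.inr ⟨u, ⟨hu, ⟨s(v, u), huc, Sym2.mem_mk_right v u⟩⟩, huc⟩

end split

lemma costA_top_or_attained {V : Type*} [Fintype V] (G : SimpleGraph V)
    (F : Set (Sym2 V)) (c : V → Color) :
    costA G F c = ⊤ ∨
      ∃ D : Set V, ValidPartial G F c D ∧ costA G F c = (D.ncard : ℕ∞) := by
  by_cases h : {n : ℕ∞ | ∃ D : Set V, ValidPartial G F c D ∧ n = D.ncard}.Nonempty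
  · right
    have hfin : {n : ℕ∞ | ∃ D : Set V, ValidPartial G F c D ∧ n = D.ncard}.Finite := by
      apply Set.Finite.subset ((Set.finite_Iic (Fintype.card V)).image
        (fun k : ℕ => (k : ℕ∞)))
      rintro n ⟨D, _, rfl⟩
      refine ⟨D.ncard, ?_, rfl⟩
      simpa [Set.ncard_univ, Nat.card_eq_fintype_card] using
        Set.ncard_le_ncard (Set.subset_univ D) Set.finite_univ
    obtain ⟨D, hD, hn⟩ := h.csInf_mem hfin
    exact ⟨D, hD, hn⟩
  · left
    rw [costA, Set.not_nonempty_iff_eq_empty.mp h, sInf_empty]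

lemma nblack_split {V : Type*} [Fintype V] (G : SimpleGraph V) (B C : Set (Sym2 V))
    (c₁ : V → Color) :
    (((bdry G (B ∪ C) ∩ bdry G B ∩ bdry G C) ∪
        ((bdry G B ∪ bdry G C) \ bdry G (B ∪ C))) ∩ {v | c₁ v = Color.black}).ncard =
      nblack (bdry G (B ∪ C) ∩ bdry G B ∩ bdry G C) c₁ +
      nblack ((bdry G B ∪ bdry G C) \ bdry G (B ∪ C)) c₁ := by
  rw [Set.union_inter_distrib_right, nblack, nblack,
    Set.ncard_union_eq ?hd (Set.toFinite _) (Set.toFinite _)]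
  case hd =>
    apply Set.disjoint_left.mpr
    rintro v ⟨⟨⟨hS, _⟩, _⟩, _⟩ ⟨⟨_, hnS⟩, _⟩
    exact hnS hS


/-- the dynamic programming recursion: for disjoint `B, C ⊆ E(G)` and
`S = B ∪ C`, for every coloring `c` of `∂S`,
`A_S(c) = min { A_B(c₁) + A_C(c₂) - #black(X₃, c₁) - #black(X₄, c₁) }` over all pairs
`(c₁, c₂)` consistent with `c` (the minimum over the empty set being `∞`). -/
theorem dp_recursion {V : Type*} [Fintype V] [DecidableEq V] (G : SimpleGraph V)
    (B C : Set (Sym2 V)) (hB : B ⊆ G.edgeSet) (hC : C ⊆ G.edgeSet) (hBC : Disjoint B C)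
    (c : V → Color) :
    costA G (B ∪ C) c =
      sInf {n : ℕ∞ | ∃ c₁ c₂ : V → Color, Consistent G B C c c₁ c₂ ∧
        n = costA G B c₁ + costA G C c₂
          - (nblack (bdry G (B ∪ C) ∩ bdry G B ∩ bdry G C) c₁ : ℕ∞)
          - (nblack ((bdry G B ∪ bdry G C) \ bdry G (B ∪ C)) c₁ : ℕ∞)} := by
  apply le_antisymm
  · apply le_sInf
    rintro n ⟨c₁, c₂, hcons, rfl⟩
    rcases costA_top_or_attained G B c₁ with h1 | ⟨D₁, hD₁, hA1⟩
    · rw [h1, top_add, ENat.top_sub_coe, ENat.top_sub_coe]; exact le_top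
    rcases costA_top_or_attained G C c₂ with h2 | ⟨D₂, hD₂, hA2⟩
    · rw [h2, add_top, ENat.top_sub_coe, ENat.top_sub_coe]; exact le_top
    have hvalid := combine_valid hB hC hBC hcons hD₁ hD₂
    have hle : costA G (B ∪ C) c ≤ ((D₁ ∪ D₂).ncard : ℕ∞) := sInf_le ⟨_, hvalid, rfl⟩
    have hinter := inter_eq_blacks hB hC hBC hcons hD₁ hD₂
    have hcard : (D₁ ∪ D₂).ncard + (D₁ ∩ D₂).ncard = D₁.ncard + D₂.ncard :=
      Set.ncard_union_add_ncard_inter D₁ D₂ (Set.toFinite _) (Set.toFinite _)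
    have hsplit : (D₁ ∩ D₂).ncard =
        nblack (bdry G (B ∪ C) ∩ bdry G B ∩ bdry G C) c₁ +
        nblack ((bdry G B ∪ bdry G C) \ bdry G (B ∪ C)) c₁ := by
      rw [hinter]; exact nblack_split G B C c₁
    rw [hA1, hA2]
    have key : ((D₁.ncard : ℕ∞) + (D₂.ncard : ℕ∞))
        - (nblack (bdry G (B ∪ C) ∩ bdry G B ∩ bdry G C) c₁ : ℕ∞)
        - (nblack ((bdry G B ∪ bdry G C) \ bdry G (B ∪ C)) c₁ : ℕ∞)
        = ((D₁ ∪ D₂).ncard : ℕ∞) := by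
      rw [← Nat.cast_add, ← ENat.coe_sub, ← ENat.coe_sub]
      exact congrArg _ (by omega)
    rw [key]; exact hle
  · apply le_sInf
    rintro n ⟨D, hD, rfl⟩
    obtain ⟨c₁, c₂, hcons, hD₁, hD₂⟩ := split_valid hB hC hBC hD
    refine le_trans (sInf_le ⟨c₁, c₂, hcons, rfl⟩) ?_
    have hinter := inter_eq_blacks hB hC hBC hcons hD₁ hD₂
    have hA1 : costA G B c₁ ≤ ((D ∩ incVerts B).ncard : ℕ∞) := sInf_le ⟨_, hD₁, rfl⟩
    have hA2 : costA G C c₂ ≤ ((D ∩ incVerts C).ncard : ℕ∞) := sInf_le ⟨_, hD₂, rfl⟩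
    have hunion : (D ∩ incVerts B) ∪ (D ∩ incVerts C) = D := by
      rw [← Set.inter_union_distrib_left, ← incVerts_union]
      exact Set.inter_eq_left.mpr hD.1
    have hcard := Set.ncard_union_add_ncard_inter (D ∩ incVerts B) (D ∩ incVerts C)
      (Set.toFinite _) (Set.toFinite _)
    rw [hunion] at hcard
    have hsplit : ((D ∩ incVerts B) ∩ (D ∩ incVerts C)).ncard =
        nblack (bdry G (B ∪ C) ∩ bdry G B ∩ bdry G C) c₁ +
        nblack ((bdry G B ∪ bdry G C) \ bdry G (B ∪ C)) c₁ := by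
      rw [hinter]; exact nblack_split G B C c₁
    calc costA G B c₁ + costA G C c₂
          - (nblack (bdry G (B ∪ C) ∩ bdry G B ∩ bdry G C) c₁ : ℕ∞)
          - (nblack ((bdry G B ∪ bdry G C) \ bdry G (B ∪ C)) c₁ : ℕ∞)
        ≤ (((D ∩ incVerts B).ncard : ℕ∞) + ((D ∩ incVerts C).ncard : ℕ∞))
          - (nblack (bdry G (B ∪ C) ∩ bdry G B ∩ bdry G C) c₁ : ℕ∞)
          - (nblack ((bdry G B ∪ bdry G C) \ bdry G (B ∪ C)) c₁ : ℕ∞) :=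
          tsub_le_tsub_right (tsub_le_tsub_right (add_le_add hA1 hA2) _) _
      _ = (D.ncard : ℕ∞) := by
          rw [← Nat.cast_add, ← ENat.coe_sub, ← ENat.coe_sub]
          exact congrArg _ (by omega)
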